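/- Let d ≥ 1, σ ∈ (−d,1) and let E ⊆ ℝ^d be measurable with finite Lebesgue measure. Then for all 0 < r₁ < r₂: (i) for every x ∈ ℝ^d, j^σ_{r₁}(x,E) ≥ j^σ_{r₂}(x,E); (ii) Ĵ^σ_{r₁}(E) ≥ Ĵ^σ_{r₂}(E). In particular for every x ∈ ℝ^d the limit j^σ(x,E) := lim_{r→0⁺} j^σ_r(x,E) exists in (−∞,+∞], the limit lim_{r→0⁺} Ĵ^σ_r(E) exists in (−∞,+∞], and lim_{r→0⁺} Ĵ^σ_r(E) = ∫_E j^σ(x,E) dx. -/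

import Mathlib

open MeasureTheory Metric Filter Topology ENNReal
open scoped symmDiff

noncomputable section

abbrev Rd (d : ℕ) := EuclideanSpace ℝ (Fin d)

/-- Lebesgue measure of the unit ball in `ℝ^d`. -/
def omegaD (d : ℕ) : ℝ := (volume (ball (0 : Rd d) 1)).toReal

/-- The kernel `|x-y|^{-(d+σ)}`. -/
def kerH (d : ℕ) (σ : ℝ) (x y : Rd d) : ℝ := ‖x - y‖ ^ (-((d : ℝ) + σ))

/-- `J^σ_r(E) = -∫_E ∫_{E∖B_r(x)} |x-y|^{-(d+σ)} dy dx`. -/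
def Jfun (d : ℕ) (σ r : ℝ) (E : Set (Rd d)) : ℝ :=
  -∫ x in E, ∫ y in E \ ball x r, kerH d σ x y

/-- The renormalization constant `γ^σ_ρ`. -/
def gam (d : ℕ) (σ ρ : ℝ) : ℝ :=
  if σ = 0 then d * omegaD d * Real.log ρ else d * omegaD d * (1 - ρ ^ (-σ)) / σ

/-- `Ĵ^σ_r(E) = J^σ_r(E) - γ^σ_r |E|`. -/
def Jhat (d : ℕ) (σ r : ℝ) (E : Set (Rd d)) : ℝ :=
  Jfun d σ r E - gam d σ r * (volume E).toReal

/-- `j^σ_r(x,E) = -∫_{E∖B_r(x)} |x-y|^{-(d+σ)} dy - γ^σ_r`. -/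
def jfun (d : ℕ) (σ r : ℝ) (x : Rd d) (E : Set (Rd d)) : ℝ :=
  -(∫ y in E \ ball x r, kerH d σ x y) - gam d σ r

/-- The nonnegative part of an extended real, as an `ℝ≥0∞` (`⊤ ↦ ⊤`). -/
def eToENN (x : EReal) : ℝ≥0∞ := if x = ⊤ then ⊤ else ENNReal.ofReal x.toReal

lemma kerH_nonneg (d : ℕ) (σ : ℝ) (x y : Rd d) : 0 ≤ kerH d σ x y :=
  Real.rpow_nonneg (norm_nonneg _) _

lemma measurable_kerH_prod (d : ℕ) (σ : ℝ) :
    Measurable (fun p : Rd d × Rd d => kerH d σ p.1 p.2) :=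
  (continuous_fst.sub continuous_snd).norm.measurable.pow_const _

lemma kerH_le (d : ℕ) (σ : ℝ) (hσ : 0 < (d : ℝ) + σ) {x y : Rd d} {r : ℝ}
    (hr : 0 < r) (hy : y ∉ ball x r) : kerH d σ x y ≤ r ^ (-((d : ℝ) + σ)) := by
  have h1 : r ≤ ‖x - y‖ := by
    rw [mem_ball, dist_comm, dist_eq_norm] at hy
    linarith [not_lt.1 hy]
  exact Real.rpow_le_rpow_of_nonpos hr h1 (by linarith)

lemma kerH_integrableOn (d : ℕ) (σ : ℝ) (hσ : 0 < (d : ℝ) + σ) (x : Rd d) {r : ℝ}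
    (hr : 0 < r) {S : Set (Rd d)} (hS : MeasurableSet S) (hSfin : volume S ≠ ⊤)
    (hSsub : S ⊆ (ball x r)ᶜ) : IntegrableOn (fun y => kerH d σ x y) S := by
  apply Measure.integrableOn_of_bounded hSfin
  · exact ((measurable_kerH_prod d σ).comp (measurable_prodMk_left : Measurable fun y => (x, y))).aestronglyMeasurable
  · filter_upwards [ae_restrict_mem hS] with y hy
    rw [Real.norm_eq_abs, abs_of_nonneg (kerH_nonneg d σ x y)]
    exact kerH_le d σ hσ hr (hSsub hy)

lemma integral_annulus (d : ℕ) (hd : 1 ≤ d) (σ : ℝ) (x : Rd d) {r₁ r₂ : ℝ}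
    (h1 : 0 < r₁) (h12 : r₁ ≤ r₂) :
    ∫ y in ball x r₂ \ ball x r₁, kerH d σ x y = gam d σ r₂ - gam d σ r₁ := by
  have hnt : Nontrivial (Rd d) := by
    apply Module.nontrivial_of_finrank_pos (R := ℝ)
    rw [finrank_euclideanSpace_fin]; omega
  have h2 : 0 < r₂ := lt_of_lt_of_le h1 h12
  set G : ℝ → ℝ := Set.indicator (Set.Ico r₁ r₂) (fun t => t ^ (-((d:ℝ)+σ))) with hG
  have hS : MeasurableSet (ball x r₂ \ ball x r₁) :=
    measurableSet_ball.diff measurableSet_ball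
  have step1 : ∫ y in ball x r₂ \ ball x r₁, kerH d σ x y = ∫ y, G ‖x - y‖ := by
    rw [← integral_indicator hS]
    congr 1; funext y
    have hmem : y ∈ ball x r₂ \ ball x r₁ ↔ ‖x - y‖ ∈ Set.Ico r₁ r₂ := by
      simp only [Set.mem_diff, mem_ball, Set.mem_Ico, dist_comm y x, dist_eq_norm, not_lt]
      tauto
    simp only [hG]
    by_cases hy : y ∈ ball x r₂ \ ball x r₁
    · rw [Set.indicator_of_mem hy, Set.indicator_of_mem (hmem.1 hy)]
      rfl
    · rw [Set.indicator_of_notMem hy, Set.indicator_of_notMem (fun h => hy (hmem.2 h))]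
  have step2 : ∫ y, G ‖x - y‖ = ∫ z, G ‖z‖ :=
    integral_sub_left_eq_self (fun z => G ‖z‖) volume x
  have step3 : ∫ z : Rd d, G ‖z‖ =
      (Module.finrank ℝ (Rd d)) • (volume (ball (0 : Rd d) 1)).toReal •
        ∫ t in Set.Ioi (0:ℝ), t ^ (Module.finrank ℝ (Rd d) - 1) • G t :=
    MeasureTheory.integral_fun_norm_addHaar volume G
  rw [step1, step2, step3, finrank_euclideanSpace_fin]
  have step4 : ∫ t in Set.Ioi (0:ℝ), t ^ (d - 1) • G t
      = ∫ t in r₁..r₂, t ^ (-1 - σ) := by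
    have : (fun t : ℝ => t ^ (d - 1) • G t)
        = Set.indicator (Set.Ico r₁ r₂) (fun t => t ^ (d - 1) * t ^ (-((d:ℝ)+σ))) := by
      funext t
      rw [hG, smul_eq_mul, Set.indicator_apply, Set.indicator_apply]
      by_cases ht : t ∈ Set.Ico r₁ r₂ <;> simp [ht]
    have hsub : Set.Ico r₁ r₂ ⊆ Set.Ioi (0:ℝ) := fun t ht => lt_of_lt_of_le h1 ht.1
    rw [this, setIntegral_indicator measurableSet_Ico,
      Set.inter_eq_self_of_subset_right hsub]
    have heq : Set.EqOn (fun t : ℝ => t ^ (d - 1) * t ^ (-((d:ℝ)+σ)))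
        (fun t : ℝ => t ^ (-1 - σ)) (Set.Ico r₁ r₂) := by
      intro t ht
      have ht0 : 0 < t := lt_of_lt_of_le h1 ht.1
      simp only
      rw [← Real.rpow_natCast t (d - 1), ← Real.rpow_add ht0]
      congr 1
      push_cast [Nat.cast_sub hd]
      ring
    rw [setIntegral_congr_fun measurableSet_Ico heq, integral_Ico_eq_integral_Ioo,
      ← integral_Ioc_eq_integral_Ioo, ← intervalIntegral.integral_of_le h12]
  rw [step4]
  have h0uIcc : (0:ℝ) ∉ Set.uIcc r₁ r₂ := by
    rw [Set.uIcc_of_le h12]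
    rintro ⟨ha, -⟩; linarith
  by_cases hσ : σ = 0
  · subst hσ
    have : (-1 - 0 : ℝ) = -1 := by ring
    rw [this]
    have : ∫ t in r₁..r₂, t ^ (-1 : ℝ) = ∫ t in r₁..r₂, t⁻¹ := by
      apply intervalIntegral.integral_congr
      intro t _; exact Real.rpow_neg_one t
    rw [this, integral_inv h0uIcc]
    simp only [gam, if_pos rfl, omegaD, nsmul_eq_mul, smul_eq_mul]
    rw [Real.log_div h2.ne' h1.ne']
    norm_num
    ring
  · rw [integral_rpow (Or.inr ⟨by intro h; apply hσ; linarith, h0uIcc⟩)]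
    have e1 : (-1 - σ + 1 : ℝ) = -σ := by ring
    rw [e1]
    simp only [gam, if_neg hσ, omegaD, nsmul_eq_mul, smul_eq_mul]
    have key : (r₂ ^ (-σ) - r₁ ^ (-σ)) / (-σ)
        = (1 - r₂ ^ (-σ)) / σ - (1 - r₁ ^ (-σ)) / σ := by
      rw [div_neg, ← neg_div, neg_sub, ← sub_div]
      congr 1; ring
    rw [key]; ring





section Main

variable {d : ℕ} {σ : ℝ} {E : Set (Rd d)}

lemma jfun_sub (hd : 1 ≤ d) (hσ1 : -(d : ℝ) < σ) (hE : MeasurableSet E)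
    (hEfin : volume E < ⊤) (x : Rd d) {r₁ r₂ : ℝ} (h1 : 0 < r₁) (h12 : r₁ ≤ r₂) :
    jfun d σ r₁ x E
      = jfun d σ r₂ x E + ∫ y in (ball x r₂ \ ball x r₁) \ E, kerH d σ x y := by
  have hdσ : 0 < (d : ℝ) + σ := by linarith
  have h2 : 0 < r₂ := lt_of_lt_of_le h1 h12
  have hA : MeasurableSet (ball x r₂ \ ball x r₁) :=
    measurableSet_ball.diff measurableSet_ball
  have hBsub : ball x r₁ ⊆ ball x r₂ := ball_subset_ball h12
  have i1 : IntegrableOn (fun y => kerH d σ x y) (E \ ball x r₂) :=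
    kerH_integrableOn d σ hdσ x h2 (hE.diff measurableSet_ball)
      ((lt_of_le_of_lt (measure_mono Set.diff_subset) hEfin).ne)
      (fun y hy => hy.2)
  have i2 : IntegrableOn (fun y => kerH d σ x y) (E ∩ (ball x r₂ \ ball x r₁)) :=
    kerH_integrableOn d σ hdσ x h1 (hE.inter hA)
      ((lt_of_le_of_lt (measure_mono (fun y hy => hy.2.1)) measure_ball_lt_top).ne)
      (fun y hy => hy.2.2)
  have i3 : IntegrableOn (fun y => kerH d σ x y) ((ball x r₂ \ ball x r₁) \ E) :=
    kerH_integrableOn d σ hdσ x h1 (hA.diff hE)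
      ((lt_of_le_of_lt (measure_mono (fun y hy => hy.1.1)) measure_ball_lt_top).ne)
      (fun y hy => hy.1.2)
  have hEdecomp : E \ ball x r₁ = (E \ ball x r₂) ∪ (E ∩ (ball x r₂ \ ball x r₁)) := by
    ext y
    simp only [Set.mem_diff, Set.mem_union, Set.mem_inter_iff]
    constructor
    · rintro ⟨hyE, hy1⟩
      by_cases hy2 : y ∈ ball x r₂
      · exact Or.inr ⟨hyE, hy2, hy1⟩
      · exact Or.inl ⟨hyE, hy2⟩
    · rintro (⟨hyE, hy2⟩ | ⟨hyE, _, hy1⟩)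
      · exact ⟨hyE, fun h => hy2 (hBsub h)⟩
      · exact ⟨hyE, hy1⟩
  have hdisj : Disjoint (E \ ball x r₂) (E ∩ (ball x r₂ \ ball x r₁)) := by
    rw [Set.disjoint_left]
    rintro y ⟨-, hy2⟩ ⟨-, hy2', -⟩
    exact hy2 hy2'
  have hIsplit : ∫ y in E \ ball x r₁, kerH d σ x y
      = (∫ y in E \ ball x r₂, kerH d σ x y)
        + ∫ y in E ∩ (ball x r₂ \ ball x r₁), kerH d σ x y := by
    rw [hEdecomp, setIntegral_union hdisj (hE.inter hA) i1 i2]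
  have hdisj2 : Disjoint (E ∩ (ball x r₂ \ ball x r₁)) ((ball x r₂ \ ball x r₁) \ E) := by
    rw [Set.disjoint_left]
    rintro y ⟨hyE, -⟩ ⟨-, hyE'⟩
    exact hyE' hyE
  have hAdecomp : ball x r₂ \ ball x r₁
      = (E ∩ (ball x r₂ \ ball x r₁)) ∪ ((ball x r₂ \ ball x r₁) \ E) := by
    rw [Set.inter_comm, Set.inter_union_diff]
  have hAsplit : (∫ y in E ∩ (ball x r₂ \ ball x r₁), kerH d σ x y)
        + ∫ y in (ball x r₂ \ ball x r₁) \ E, kerH d σ x y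
      = ∫ y in ball x r₂ \ ball x r₁, kerH d σ x y := by
    rw [← setIntegral_union hdisj2 (hA.diff hE) i2 i3, ← hAdecomp]
  have hann := integral_annulus d hd σ x h1 h12
  simp only [jfun]
  rw [hIsplit]
  rw [← hAsplit] at hann
  linarith

lemma inner_aesm (hE : MeasurableSet E) (r : ℝ) :
    AEStronglyMeasurable (fun x : Rd d => ∫ y in E \ ball x r, kerH d σ x y) volume := by
  have hset : MeasurableSet {q : Rd d × Rd d | q.2 ∈ E \ ball q.1 r} := by
    have : {q : Rd d × Rd d | q.2 ∈ E \ ball q.1 r}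
        = (Prod.snd ⁻¹' E) ∩ {q : Rd d × Rd d | dist q.2 q.1 < r}ᶜ := by
      ext q
      simp only [Set.mem_setOf_eq, Set.mem_diff, mem_ball, Set.mem_inter_iff,
        Set.mem_preimage, Set.mem_compl_iff]
    rw [this]
    exact (measurable_snd hE).inter
      ((measurableSet_lt ((continuous_snd.dist continuous_fst).measurable)
        measurable_const).compl)
  have h1 : StronglyMeasurable fun p : Rd d × Rd d =>
      Set.indicator {q : Rd d × Rd d | q.2 ∈ E \ ball q.1 r}
        (fun q => kerH d σ q.1 q.2) p :=
    ((measurable_kerH_prod d σ).indicator hset).stronglyMeasurable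
  have h2 := h1.integral_prod_right' (ν := volume)
  have heq : (fun x : Rd d => ∫ y in E \ ball x r, kerH d σ x y)
      = fun x : Rd d => ∫ y, Set.indicator {q : Rd d × Rd d | q.2 ∈ E \ ball q.1 r}
          (fun q => kerH d σ q.1 q.2) (x, y) := by
    funext x
    rw [← integral_indicator (hE.diff measurableSet_ball)]
    congr 1
  rw [heq]
  exact h2.aestronglyMeasurable

lemma inner_bound (hσ1 : -(d : ℝ) < σ) (hE : MeasurableSet E) (hEfin : volume E < ⊤)
    {r : ℝ} (hr : 0 < r) (x : Rd d) :
    ‖∫ y in E \ ball x r, kerH d σ x y‖ ≤ r ^ (-((d : ℝ) + σ)) * (volume E).toReal := by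
  have hdσ : 0 < (d : ℝ) + σ := by linarith
  have hEr : volume (E \ ball x r) < ⊤ := lt_of_le_of_lt (measure_mono Set.diff_subset) hEfin
  calc ‖∫ y in E \ ball x r, kerH d σ x y‖
      ≤ r ^ (-((d : ℝ) + σ)) * (volume (E \ ball x r)).toReal := by
        apply norm_setIntegral_le_of_norm_le_const hEr
        intro y hy
        rw [Real.norm_eq_abs, abs_of_nonneg (kerH_nonneg d σ x y)]
        exact kerH_le d σ hdσ hr hy.2
    _ ≤ r ^ (-((d : ℝ) + σ)) * (volume E).toReal := by
        apply mul_le_mul_of_nonneg_left _ (Real.rpow_nonneg hr.le _)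
        exact ENNReal.toReal_mono hEfin.ne (measure_mono Set.diff_subset)

lemma inner_integrableOn (hσ1 : -(d : ℝ) < σ) (hE : MeasurableSet E)
    (hEfin : volume E < ⊤) {r : ℝ} (hr : 0 < r) :
    IntegrableOn (fun x : Rd d => ∫ y in E \ ball x r, kerH d σ x y) E :=
  Measure.integrableOn_of_bounded hEfin.ne (inner_aesm hE r)
    (ae_of_all _ fun x => inner_bound hσ1 hE hEfin hr x)

lemma jfun_integrableOn (hσ1 : -(d : ℝ) < σ) (hE : MeasurableSet E)
    (hEfin : volume E < ⊤) {r : ℝ} (hr : 0 < r) :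
    IntegrableOn (fun x => jfun d σ r x E) E :=
  ((inner_integrableOn hσ1 hE hEfin hr).neg).sub
    (integrableOn_const hEfin.ne)

lemma Jhat_eq (hσ1 : -(d : ℝ) < σ) (hE : MeasurableSet E)
    (hEfin : volume E < ⊤) {r : ℝ} (hr : 0 < r) :
    Jhat d σ r E = ∫ x in E, jfun d σ r x E := by
  have h1 : ∫ x in E, jfun d σ r x E
      = (∫ x in E, -(∫ y in E \ ball x r, kerH d σ x y)) - ∫ x in E, gam d σ r :=
    integral_sub ((inner_integrableOn hσ1 hE hEfin hr).neg)
      (integrableOn_const hEfin.ne)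
  rw [Jhat, Jfun, h1, integral_neg, setIntegral_const, smul_eq_mul, mul_comm, measureReal_def]

end Main

section Main2

variable {d : ℕ} {σ : ℝ} {E : Set (Rd d)}

/-- The kernel measure. -/
def nuK (d : ℕ) (σ : ℝ) (x : Rd d) : Measure (Rd d) :=
  volume.withDensity fun y => ENNReal.ofReal (kerH d σ x y)

def Aset (E : Set (Rd d)) (r : ℝ) (x : Rd d) : Set (Rd d) := (ball x 1 \ ball x r) \ E

def A0set (E : Set (Rd d)) (x : Rd d) : Set (Rd d) := (ball x 1 \ {x}) \ E

lemma Aset_measurableSet (hE : MeasurableSet E) (r : ℝ) (x : Rd d) :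
    MeasurableSet (Aset E r x) :=
  ((measurableSet_ball.diff measurableSet_ball).diff hE)

lemma nuK_apply (x : Rd d) {S : Set (Rd d)} (hS : MeasurableSet S) :
    nuK d σ x S = ∫⁻ y in S, ENNReal.ofReal (kerH d σ x y) :=
  withDensity_apply _ hS

lemma Aset_anti {r r' : ℝ} (h : r ≤ r') (x : Rd d) : Aset E r' x ⊆ Aset E r x :=
  fun y hy => ⟨⟨hy.1.1, fun hc => hy.1.2 (ball_subset_ball h hc)⟩, hy.2⟩

lemma Aset_subset_A0 {r : ℝ} (hr : 0 < r) (x : Rd d) : Aset E r x ⊆ A0set E x := by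
  rintro y ⟨⟨hy1, hy2⟩, hy3⟩
  refine ⟨⟨hy1, ?_⟩, hy3⟩
  intro hc
  rw [Set.mem_singleton_iff] at hc
  exact hy2 (by simp [hc, mem_ball, hr])

lemma iUnion_Aset (x : Rd d) : (⋃ n : ℕ, Aset E (1 / (n + 1)) x) = A0set E x := by
  ext y
  simp only [Set.mem_iUnion, Aset, A0set, Set.mem_diff, Set.mem_singleton_iff, mem_ball]
  constructor
  · rintro ⟨n, ⟨⟨h1, h2⟩, h3⟩⟩
    refine ⟨⟨h1, ?_⟩, h3⟩
    rintro rfl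
    exact h2 (by rw [dist_self]; positivity)
  · rintro ⟨⟨h1, h2⟩, h3⟩
    have hd0 : 0 < dist y x := dist_pos.2 h2
    obtain ⟨n, hn⟩ := exists_nat_one_div_lt hd0
    exact ⟨n, ⟨⟨h1, fun hc => absurd hn (by push_cast; linarith)⟩, h3⟩⟩

lemma nuK_mono (x : Rd d) {S T : Set (Rd d)} (h : S ⊆ T) : nuK d σ x S ≤ nuK d σ x T :=
  measure_mono h

lemma nuK_A0_eq_iSup (x : Rd d) :
    nuK d σ x (A0set E x) = ⨆ n : ℕ, nuK d σ x (Aset E (1 / (n + 1)) x) := by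
  rw [← iUnion_Aset (E := E) x]
  apply Directed.measure_iUnion
  apply Monotone.directed_le
  intro n m hnm
  apply Aset_anti
  have h1 : (0:ℝ) < n + 1 := by positivity
  have h2 : (n:ℝ) + 1 ≤ (m:ℝ) + 1 := by push_cast; exact_mod_cast by omega
  exact one_div_le_one_div_of_le h1 h2

lemma nuK_bound (hσ1 : -(d : ℝ) < σ) (x : Rd d) {r : ℝ} (hr : 0 < r)
    {S : Set (Rd d)} (hS : MeasurableSet S) (hSsub : S ⊆ (ball x r)ᶜ) :
    nuK d σ x S ≤ ENNReal.ofReal (r ^ (-((d : ℝ) + σ))) * volume S := by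
  have hdσ : 0 < (d : ℝ) + σ := by linarith
  rw [nuK_apply x hS]
  calc ∫⁻ y in S, ENNReal.ofReal (kerH d σ x y)
      ≤ ∫⁻ _ in S, ENNReal.ofReal (r ^ (-((d : ℝ) + σ))) := by
        apply lintegral_mono_ae
        filter_upwards [ae_restrict_mem hS] with y hy
        exact ENNReal.ofReal_le_ofReal (kerH_le d σ hdσ hr (hSsub hy))
    _ = ENNReal.ofReal (r ^ (-((d : ℝ) + σ))) * volume S := setLIntegral_const _ _

lemma nuK_Aset_lt_top (hσ1 : -(d : ℝ) < σ) (hE : MeasurableSet E) (x : Rd d)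
    {r : ℝ} (hr : 0 < r) : nuK d σ x (Aset E r x) < ⊤ := by
  calc nuK d σ x (Aset E r x)
      ≤ ENNReal.ofReal (r ^ (-((d : ℝ) + σ))) * volume (Aset E r x) :=
        nuK_bound hσ1 x hr (Aset_measurableSet hE r x) (fun y hy => hy.1.2)
    _ ≤ ENNReal.ofReal (r ^ (-((d : ℝ) + σ))) * volume (ball x 1) := by
        exact mul_le_mul_right (measure_mono (fun y hy => hy.1.1)) _
    _ < ⊤ := ENNReal.mul_lt_top ENNReal.ofReal_lt_top measure_ball_lt_top

lemma integral_Aset_eq_toReal (hE : MeasurableSet E) (x : Rd d) (r : ℝ) :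
    ∫ y in Aset E r x, kerH d σ x y = (nuK d σ x (Aset E r x)).toReal := by
  rw [nuK_apply x (Aset_measurableSet hE r x)]
  rw [integral_eq_lintegral_of_nonneg_ae (ae_of_all _ fun y => kerH_nonneg d σ x y)
    ((measurable_kerH_prod d σ).comp
      (measurable_prodMk_left : Measurable fun y => (x, y))).aestronglyMeasurable.restrict]

lemma jfun_repr (hd : 1 ≤ d) (hσ1 : -(d : ℝ) < σ) (hE : MeasurableSet E)
    (hEfin : volume E < ⊤) (x : Rd d) {r : ℝ} (hr : 0 < r) (hr1 : r ≤ 1) :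
    jfun d σ r x E = jfun d σ 1 x E + (nuK d σ x (Aset E r x)).toReal := by
  rw [← integral_Aset_eq_toReal hE x r]
  exact jfun_sub hd hσ1 hE hEfin x hr hr1

lemma ennreal_coe_toReal {c : ℝ≥0∞} (h : c ≠ ⊤) : ((c.toReal : ℝ) : EReal) = (c : EReal) := by
  rw [← EReal.toReal_coe_ennreal, EReal.coe_toReal (by simp [h]) (EReal.bot_lt_coe_ennreal c).ne']

lemma tendsto_const_add_coe {α : Type*} {l : Filter α} (c : ℝ) {g : α → ℝ≥0∞} {L : ℝ≥0∞}
    (hg : Tendsto g l (𝓝 L)) :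
    Tendsto (fun a => (c : EReal) + ((g a : ℝ≥0∞) : EReal)) l (𝓝 ((c : EReal) + (L : EReal))) := by
  have h1 : Tendsto (fun a => ((c : EReal), ((g a : ℝ≥0∞) : EReal))) l
      (𝓝 ((c : EReal), (L : EReal))) :=
    tendsto_const_nhds.prodMk_nhds ((continuous_coe_ennreal_ereal.tendsto L).comp hg)
  exact (EReal.continuousAt_add (p := ((c : EReal), (L : EReal)))
    (Or.inl (EReal.coe_ne_top c)) (Or.inl (EReal.coe_ne_bot c))).tendsto.comp h1

lemma tendsto_nuA (hE : MeasurableSet E) (x : Rd d) :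
    Tendsto (fun r => nuK d σ x (Aset E r x)) (𝓝[>] (0:ℝ)) (𝓝 (nuK d σ x (A0set E x))) := by
  have hant : AntitoneOn (fun r => nuK d σ x (Aset E r x)) (Set.Ioi (0:ℝ)) :=
    fun r _ r' _ hle => nuK_mono x (Aset_anti hle x)
  have htd := hant.tendsto_nhdsGT (OrderTop.bddAbove _)
  have hsup : sSup ((fun r => nuK d σ x (Aset E r x)) '' Set.Ioi (0:ℝ))
      = nuK d σ x (A0set E x) := by
    apply le_antisymm
    · apply sSup_le
      rintro v ⟨r, hr, rfl⟩
      exact nuK_mono x (Aset_subset_A0 hr x)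
    · rw [nuK_A0_eq_iSup]
      apply iSup_le
      intro n
      exact le_sSup ⟨1 / (n + 1), Set.mem_Ioi.2 (by positivity), rfl⟩
  rwa [hsup] at htd

lemma jfun_tendsto (hd : 1 ≤ d) (hσ1 : -(d : ℝ) < σ) (hE : MeasurableSet E)
    (hEfin : volume E < ⊤) (x : Rd d) :
    Tendsto (fun r => ((jfun d σ r x E : ℝ) : EReal)) (𝓝[>] (0:ℝ))
      (𝓝 ((jfun d σ 1 x E : EReal) + (nuK d σ x (A0set E x) : EReal))) := by
  apply Tendsto.congr'
    (f₁ := fun r => ((jfun d σ 1 x E : ℝ) : EReal) + ((nuK d σ x (Aset E r x) : ℝ≥0∞) : EReal))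
  · filter_upwards [Ioc_mem_nhdsGT_of_mem (α := ℝ) ⟨le_refl 0, zero_lt_one⟩] with r hr
    rw [jfun_repr hd hσ1 hE hEfin x hr.1 hr.2, EReal.coe_add,
      ennreal_coe_toReal (nuK_Aset_lt_top hσ1 hE x hr.1).ne]
  · exact tendsto_const_add_coe _ (tendsto_nuA hE x)

end Main2

section Main3

variable {d : ℕ} {σ : ℝ} {E : Set (Rd d)}

lemma meas_nuA (hE : MeasurableSet E) (r : ℝ) :
    Measurable (fun x : Rd d => nuK d σ x (Aset E r x)) := by
  have hset : MeasurableSet {q : Rd d × Rd d | q.2 ∈ Aset E r q.1} := by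
    have : {q : Rd d × Rd d | q.2 ∈ Aset E r q.1}
        = (((fun q : Rd d × Rd d => dist q.2 q.1) ⁻¹' Set.Iio 1)
            ∩ ((fun q : Rd d × Rd d => dist q.2 q.1) ⁻¹' Set.Iio r)ᶜ)
          ∩ (Prod.snd ⁻¹' E)ᶜ := by
      ext q
      simp only [Aset, Set.mem_setOf_eq, Set.mem_diff, mem_ball, Set.mem_inter_iff,
        Set.mem_preimage, Set.mem_compl_iff, Set.mem_Iio]
    rw [this]
    have hdistm : Measurable fun q : Rd d × Rd d => dist q.2 q.1 :=
      (continuous_snd.dist continuous_fst).measurable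
    exact ((hdistm measurableSet_Iio).inter (hdistm measurableSet_Iio).compl).inter
      ((measurable_snd hE).compl)
  have hF : Measurable fun q : Rd d × Rd d =>
      Set.indicator {q : Rd d × Rd d | q.2 ∈ Aset E r q.1}
        (fun q => ENNReal.ofReal (kerH d σ q.1 q.2)) q :=
    ((measurable_kerH_prod d σ).ennreal_ofReal).indicator hset
  have h2 := hF.lintegral_prod_right' (ν := (volume : Measure (Rd d)))
  have heq : (fun x : Rd d => nuK d σ x (Aset E r x))
      = fun x : Rd d => ∫⁻ y, Set.indicator {q : Rd d × Rd d | q.2 ∈ Aset E r q.1}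
          (fun q => ENNReal.ofReal (kerH d σ q.1 q.2)) (x, y) := by
    funext x
    rw [nuK_apply x (Aset_measurableSet hE r x), ← lintegral_indicator (Aset_measurableSet hE r x)]
    congr 1
  rw [heq]
  exact h2

lemma meas_nuA0 (hE : MeasurableSet E) :
    Measurable (fun x : Rd d => nuK d σ x (A0set E x)) := by
  have : (fun x : Rd d => nuK d σ x (A0set E x))
      = fun x : Rd d => ⨆ n : ℕ, nuK d σ x (Aset E (1 / (n + 1)) x) := by
    funext x; exact nuK_A0_eq_iSup x
  rw [this]
  exact Measurable.iSup fun n => meas_nuA hE _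

lemma nuA_unif_bound (hσ1 : -(d : ℝ) < σ) (hE : MeasurableSet E) {r : ℝ} (hr : 0 < r)
    (x : Rd d) :
    nuK d σ x (Aset E r x)
      ≤ ENNReal.ofReal (r ^ (-((d : ℝ) + σ))) * volume (ball (0 : Rd d) 1) := by
  calc nuK d σ x (Aset E r x)
      ≤ ENNReal.ofReal (r ^ (-((d : ℝ) + σ))) * volume (Aset E r x) :=
        nuK_bound hσ1 x hr (Aset_measurableSet hE r x) (fun y hy => hy.1.2)
    _ ≤ ENNReal.ofReal (r ^ (-((d : ℝ) + σ))) * volume (ball x 1) :=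
        mul_le_mul_right (measure_mono (fun y hy => hy.1.1)) _
    _ = ENNReal.ofReal (r ^ (-((d : ℝ) + σ))) * volume (ball (0 : Rd d) 1) := by
        rw [Measure.addHaar_ball_center]

lemma G_ne_top (hσ1 : -(d : ℝ) < σ) (hE : MeasurableSet E) (hEfin : volume E < ⊤)
    {r : ℝ} (hr : 0 < r) :
    (∫⁻ x in E, nuK d σ x (Aset E r x)) ≠ ⊤ := by
  apply ne_of_lt
  calc ∫⁻ x in E, nuK d σ x (Aset E r x)
      ≤ ∫⁻ _ in E, ENNReal.ofReal (r ^ (-((d : ℝ) + σ))) * volume (ball (0 : Rd d) 1) :=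
        lintegral_mono_ae (ae_of_all _ fun x => nuA_unif_bound hσ1 hE hr x)
    _ = ENNReal.ofReal (r ^ (-((d : ℝ) + σ))) * volume (ball (0 : Rd d) 1) * volume E :=
        setLIntegral_const _ _
    _ < ⊤ := ENNReal.mul_lt_top
        (ENNReal.mul_lt_top ENNReal.ofReal_lt_top measure_ball_lt_top) hEfin

lemma tendsto_G (hE : MeasurableSet E) :
    Tendsto (fun r => ∫⁻ x in E, nuK d σ x (Aset E r x)) (𝓝[>] (0:ℝ))
      (𝓝 (∫⁻ x in E, nuK d σ x (A0set E x))) := by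
  have hant : AntitoneOn (fun r => ∫⁻ x in E, nuK d σ x (Aset E r x)) (Set.Ioi (0:ℝ)) :=
    fun r _ r' _ hle => lintegral_mono fun x => nuK_mono x (Aset_anti hle x)
  have htd := hant.tendsto_nhdsGT (OrderTop.bddAbove _)
  have hsup : sSup ((fun r => ∫⁻ x in E, nuK d σ x (Aset E r x)) '' Set.Ioi (0:ℝ))
      = ∫⁻ x in E, nuK d σ x (A0set E x) := by
    apply le_antisymm
    · apply sSup_le
      rintro v ⟨r, hr, rfl⟩
      exact lintegral_mono fun x => nuK_mono x (Aset_subset_A0 hr x)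
    · have h1 : (∫⁻ x in E, nuK d σ x (A0set E x))
          = ⨆ n : ℕ, ∫⁻ x in E, nuK d σ x (Aset E (1 / (n + 1)) x) := by
        rw [← lintegral_iSup (fun n => (meas_nuA hE _)) ?_]
        · exact lintegral_congr fun x => nuK_A0_eq_iSup x
        · intro n m hnm
          intro x
          apply nuK_mono
          apply Aset_anti
          have h1 : (0:ℝ) < n + 1 := by positivity
          exact one_div_le_one_div_of_le h1 (by exact_mod_cast by omega)
      rw [h1]
      apply iSup_le
      intro n
      exact le_sSup ⟨1 / (n + 1), Set.mem_Ioi.2 (by positivity), rfl⟩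
  rwa [hsup] at htd

lemma toReal_nuA_integrableOn (hd : 1 ≤ d) (hσ1 : -(d : ℝ) < σ) (hE : MeasurableSet E)
    (hEfin : volume E < ⊤) {r : ℝ} (hr : 0 < r) (hr1 : r ≤ 1) :
    IntegrableOn (fun x => (nuK d σ x (Aset E r x)).toReal) E := by
  apply ((jfun_integrableOn hσ1 hE hEfin hr).sub (jfun_integrableOn hσ1 hE hEfin one_pos)).congr
  apply ae_of_all
  intro x
  simp only [Pi.sub_apply]
  rw [jfun_repr hd hσ1 hE hEfin x hr hr1]
  ring

lemma Jhat_repr (hd : 1 ≤ d) (hσ1 : -(d : ℝ) < σ) (hE : MeasurableSet E)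
    (hEfin : volume E < ⊤) {r : ℝ} (hr : 0 < r) (hr1 : r ≤ 1) :
    Jhat d σ r E = (∫ x in E, jfun d σ 1 x E)
      + (∫⁻ x in E, nuK d σ x (Aset E r x)).toReal := by
  rw [Jhat_eq hσ1 hE hEfin hr]
  have h1 : ∫ x in E, jfun d σ r x E
      = ∫ x in E, (jfun d σ 1 x E + (nuK d σ x (Aset E r x)).toReal) := by
    apply setIntegral_congr_fun hE
    intro x _
    exact jfun_repr hd hσ1 hE hEfin x hr hr1
  rw [h1, integral_add (jfun_integrableOn hσ1 hE hEfin one_pos)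
    (toReal_nuA_integrableOn hd hσ1 hE hEfin hr hr1)]
  congr 1
  exact integral_toReal ((meas_nuA hE r).aemeasurable)
    (ae_of_all _ fun x => nuK_Aset_lt_top hσ1 hE x hr)

lemma Jhat_tendsto (hd : 1 ≤ d) (hσ1 : -(d : ℝ) < σ) (hE : MeasurableSet E)
    (hEfin : volume E < ⊤) :
    Tendsto (fun r => ((Jhat d σ r E : ℝ) : EReal)) (𝓝[>] (0:ℝ))
      (𝓝 (((∫ x in E, jfun d σ 1 x E : ℝ) : EReal)
        + ((∫⁻ x in E, nuK d σ x (A0set E x) : ℝ≥0∞) : EReal))) := by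
  apply Tendsto.congr'
    (f₁ := fun r => ((∫ x in E, jfun d σ 1 x E : ℝ) : EReal)
      + ((∫⁻ x in E, nuK d σ x (Aset E r x) : ℝ≥0∞) : EReal))
  · filter_upwards [Ioc_mem_nhdsGT_of_mem (α := ℝ) ⟨le_refl 0, zero_lt_one⟩] with r hr
    rw [Jhat_repr hd hσ1 hE hEfin hr.1 hr.2, EReal.coe_add,
      ennreal_coe_toReal (G_ne_top hσ1 hE hEfin hr.1)]
  · exact tendsto_const_add_coe _ (tendsto_G hE)

end Main3

section Main4

variable {d : ℕ} {σ : ℝ} {E : Set (Rd d)}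

lemma eToENN_coe (a : ℝ) : eToENN ((a : ℝ) : EReal) = ENNReal.ofReal a := by
  rw [eToENN, if_neg (EReal.coe_ne_top a), EReal.toReal_coe]

lemma eToENN_top : eToENN (⊤ : EReal) = ⊤ := if_pos rfl

lemma eToENN_bot : eToENN (⊥ : EReal) = 0 := by
  rw [eToENN, if_neg (by simp), EReal.toReal_bot, ENNReal.ofReal_zero]

lemma final_identity (hd : 1 ≤ d) (hσ1 : -(d : ℝ) < σ) (hE : MeasurableSet E)
    (hEfin : volume E < ⊤) :
    ((∫ x in E, jfun d σ 1 x E : ℝ) : EReal)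
        + ((∫⁻ x in E, nuK d σ x (A0set E x) : ℝ≥0∞) : EReal)
      = ((∫⁻ x in E, eToENN ((jfun d σ 1 x E : EReal)
            + (nuK d σ x (A0set E x) : EReal))) : ℝ≥0∞)
        - (((∫⁻ x in E, eToENN (-((jfun d σ 1 x E : EReal)
            + (nuK d σ x (A0set E x) : EReal)))) : ℝ≥0∞) : EReal) := by
  set c : Rd d → ℝ := fun x => jfun d σ 1 x E with hc
  set L : Rd d → ℝ≥0∞ := fun x => nuK d σ x (A0set E x) with hL
  set jl : Rd d → EReal := fun x => (c x : EReal) + (L x : EReal) with hjl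
  have hc_int : IntegrableOn c E := jfun_integrableOn hσ1 hE hEfin one_pos
  have hK : (∫⁻ x in E, ENNReal.ofReal ‖c x‖) ≠ ⊤ := by
    have h2 := hc_int.2
    rw [HasFiniteIntegral] at h2
    simp only [ofReal_norm_eq_enorm]
    exact h2.ne
  have hjl_top : ∀ x, L x = ⊤ → jl x = ⊤ := by
    intro x h
    simp only [hjl, h, EReal.coe_ennreal_top, EReal.coe_add_top]
  have hjl_coe : ∀ x, L x ≠ ⊤ → jl x = ((c x + (L x).toReal : ℝ) : EReal) := by
    intro x h
    simp only [hjl, EReal.coe_add, ennreal_coe_toReal h]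
  have hNle : ∀ x, eToENN (-(jl x)) ≤ ENNReal.ofReal ‖c x‖ := by
    intro x
    by_cases h : L x = ⊤
    · rw [hjl_top x h, EReal.neg_top, eToENN_bot]
      exact zero_le
    · rw [hjl_coe x h, ← EReal.coe_neg, eToENN_coe]
      apply ENNReal.ofReal_le_ofReal
      have h1 : (0:ℝ) ≤ (L x).toReal := ENNReal.toReal_nonneg
      have h2 : -‖c x‖ ≤ c x := neg_abs_le (c x)
      rw [Real.norm_eq_abs] at h2 ⊢
      linarith
  have hN_ne_top : (∫⁻ x in E, eToENN (-(jl x))) ≠ ⊤ :=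
    ne_top_of_le_ne_top hK (lintegral_mono fun x => hNle x)
  by_cases hM : (∫⁻ x in E, L x) = ⊤
  · have hle : ∀ x, L x ≤ eToENN (jl x) + ENNReal.ofReal ‖c x‖ := by
      intro x
      by_cases h : L x = ⊤
      · rw [hjl_top x h, eToENN_top]
        simp
      · have e1 : eToENN (jl x) = ENNReal.ofReal (c x + (L x).toReal) := by
          rw [hjl_coe x h, eToENN_coe]
        rw [e1]
        calc L x = ENNReal.ofReal (L x).toReal := (ENNReal.ofReal_toReal h).symm
          _ ≤ ENNReal.ofReal ((c x + (L x).toReal) + ‖c x‖) := by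
              apply ENNReal.ofReal_le_ofReal
              rw [Real.norm_eq_abs]
              linarith [neg_abs_le (c x)]
          _ ≤ _ := ENNReal.ofReal_add_le
    have haem : AEMeasurable (fun x => ENNReal.ofReal ‖c x‖) (volume.restrict E) :=
      ENNReal.measurable_ofReal.comp_aemeasurable
        hc_int.aestronglyMeasurable.norm.aemeasurable
    have hsum : (∫⁻ x in E, L x)
        ≤ (∫⁻ x in E, eToENN (jl x)) + ∫⁻ x in E, ENNReal.ofReal ‖c x‖ := by
      calc (∫⁻ x in E, L x) ≤ ∫⁻ x in E, (eToENN (jl x) + ENNReal.ofReal ‖c x‖) :=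
            lintegral_mono hle
        _ = _ := lintegral_add_right' _ haem
    have hPtop : (∫⁻ x in E, eToENN (jl x)) = ⊤ := by
      by_contra hP
      exact (ENNReal.add_ne_top.2 ⟨hP, hK⟩) (top_le_iff.1 (hM ▸ hsum))
    rw [hM, hPtop, EReal.coe_ennreal_top, EReal.coe_add_top, sub_eq_add_neg,
      EReal.top_add_of_ne_bot]
    rw [Ne, EReal.neg_eq_bot_iff, EReal.coe_ennreal_eq_top_iff]
    exact hN_ne_top
  · have hLae : ∀ᵐ x ∂(volume.restrict E), L x < ⊤ := ae_lt_top (meas_nuA0 hE) hM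
    have htint : Integrable (fun x => (L x).toReal) (volume.restrict E) :=
      integrable_toReal_of_lintegral_ne_top (meas_nuA0 hE).aemeasurable hM
    set φ : Rd d → ℝ := fun x => c x + (L x).toReal with hφ
    have hφint : Integrable φ (volume.restrict E) := hc_int.add htint
    have hjl_ae : ∀ᵐ x ∂(volume.restrict E), jl x = ((φ x : ℝ) : EReal) :=
      hLae.mono fun x hx => hjl_coe x hx.ne
    have hP_eq : (∫⁻ x in E, eToENN (jl x)) = ∫⁻ x in E, ENNReal.ofReal (φ x) :=
      lintegral_congr_ae (hjl_ae.mono fun x hx => by show eToENN (jl x) = _; rw [hx, eToENN_coe])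
    have hN_eq : (∫⁻ x in E, eToENN (-(jl x))) = ∫⁻ x in E, ENNReal.ofReal (-(φ x)) :=
      lintegral_congr_ae (hjl_ae.mono fun x hx => by show eToENN (-(jl x)) = _; rw [hx, ← EReal.coe_neg, eToENN_coe])
    have hφfin := hφint.2
    rw [HasFiniteIntegral] at hφfin
    have hP_ne : (∫⁻ x in E, ENNReal.ofReal (φ x)) ≠ ⊤ := by
      refine ne_top_of_le_ne_top hφfin.ne (lintegral_mono fun x => ?_)
      rw [← ofReal_norm_eq_enorm]
      exact ENNReal.ofReal_le_ofReal (le_abs_self _)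
    have hN_ne : (∫⁻ x in E, ENNReal.ofReal (-(φ x))) ≠ ⊤ := by
      refine ne_top_of_le_ne_top hφfin.ne (lintegral_mono fun x => ?_)
      rw [← ofReal_norm_eq_enorm]
      exact ENNReal.ofReal_le_ofReal (neg_le_abs _)
    have hint_eq := integral_eq_lintegral_pos_part_sub_lintegral_neg_part hφint
    rw [hP_eq, hN_eq, ← ennreal_coe_toReal hP_ne, ← ennreal_coe_toReal hN_ne,
      ← EReal.coe_sub, ← hint_eq, ← ennreal_coe_toReal hM, ← EReal.coe_add,
      EReal.coe_eq_coe_iff]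
    have h1 : ∫ x in E, φ x = (∫ x in E, c x) + ∫ x in E, (L x).toReal :=
      integral_add hc_int htint
    have h2 : ∫ x in E, (L x).toReal = (∫⁻ x in E, L x).toReal :=
      integral_toReal (meas_nuA0 hE).aemeasurable hLae
    rw [h1, h2]

end Main4


theorem j_and_Jhat_monotone_limits
    (d : ℕ) (hd : 1 ≤ d) (σ : ℝ) (hσ1 : -(d : ℝ) < σ) (hσ2 : σ < 1)
    (E : Set (Rd d)) (hE : MeasurableSet E) (hEfin : volume E < ⊤) :
    (∀ x : Rd d, AntitoneOn (fun r => jfun d σ r x E) (Set.Ioi (0 : ℝ))) ∧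
    AntitoneOn (fun r => Jhat d σ r E) (Set.Ioi (0 : ℝ)) ∧
    ∃ jlim : Rd d → EReal,
      (∀ x : Rd d,
        Tendsto (fun r => ((jfun d σ r x E : ℝ) : EReal)) (𝓝[>] (0 : ℝ)) (𝓝 (jlim x))) ∧
      Tendsto (fun r => ((Jhat d σ r E : ℝ) : EReal)) (𝓝[>] (0 : ℝ))
        (𝓝 (((∫⁻ x in E, eToENN (jlim x)) : ℝ≥0∞)
          - ((∫⁻ x in E, eToENN (-(jlim x)) : ℝ≥0∞) : EReal))) := by
  have hjant : ∀ x : Rd d, AntitoneOn (fun r => jfun d σ r x E) (Set.Ioi (0 : ℝ)) := by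
    intro x r₁ h₁ r₂ h₂ h12
    show jfun d σ r₂ x E ≤ jfun d σ r₁ x E
    rw [jfun_sub hd hσ1 hE hEfin x (Set.mem_Ioi.1 h₁) h12]
    have hnn : 0 ≤ ∫ y in (ball x r₂ \ ball x r₁) \ E, kerH d σ x y :=
      setIntegral_nonneg ((measurableSet_ball.diff measurableSet_ball).diff hE)
        (fun y _ => kerH_nonneg d σ x y)
    linarith
  refine ⟨hjant, ?_, ?_⟩
  · intro r₁ h₁ r₂ h₂ h12
    show Jhat d σ r₂ E ≤ Jhat d σ r₁ E
    rw [Jhat_eq hσ1 hE hEfin (Set.mem_Ioi.1 h₁), Jhat_eq hσ1 hE hEfin (Set.mem_Ioi.1 h₂)]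
    exact integral_mono (jfun_integrableOn hσ1 hE hEfin (Set.mem_Ioi.1 h₂))
      (jfun_integrableOn hσ1 hE hEfin (Set.mem_Ioi.1 h₁))
      (fun x => hjant x h₁ h₂ h12)
  · refine ⟨fun x => (jfun d σ 1 x E : EReal) + (nuK d σ x (A0set E x) : EReal),
      fun x => jfun_tendsto hd hσ1 hE hEfin x, ?_⟩
    have hid := final_identity hd hσ1 hE hEfin
    rw [← hid]
    exact Jhat_tendsto hd hσ1 hE hEfin
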